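/- If φ : ℝ → ℝ is twice differentiable with values in (-1,1), satisfies φ'' = (ω - γφ²)φ/(1-φ²), tends to 0 together with φ' at ±∞ (so the conserved energy is 0), and attains its maximum value M ∈ (0,1) at some point, then M satisfies ((ω-γ)/2)·log(1-M²) = (γ/2)·M². -/

import Mathlib

open Filter

/-- If φ solves φ'' = (ω-γφ²)φ/(1-φ²) with |φ|<1, φ and φ' tend to 0 at ±∞, and φ
attains its maximum M ∈ (0,1) at a critical point, then ((ω-γ)/2)·log(1-M²) = (γ/2)·M². -/
theorem stmt_7 (ω γ : ℝ) (hγ : 0 < γ) (hω : ω ∈ Set.Ioo 0 γ)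
    (φ φ' φ'' : ℝ → ℝ)
    (hφ : ∀ x, HasDerivAt φ (φ' x) x) (hφ' : ∀ x, HasDerivAt φ' (φ'' x) x)
    (hb : ∀ x, |φ x| < 1)
    (hode : ∀ x, φ'' x = (ω - γ * φ x ^ 2) * φ x / (1 - φ x ^ 2))
    (hdecay : Tendsto φ atTop (nhds 0) ∧ Tendsto φ atBot (nhds 0) ∧
      Tendsto φ' atTop (nhds 0) ∧ Tendsto φ' atBot (nhds 0))
    (M x₀ : ℝ) (hM : M = φ x₀) (hMpos : 0 < M) (hM1 : M < 1)
    (hmax : ∀ x, φ x ≤ M) (hcrit : φ' x₀ = 0) :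
    (ω - γ) / 2 * Real.log (1 - M ^ 2) = γ / 2 * M ^ 2 := by
  obtain ⟨hT, hB, hT', hB'⟩ := hdecay
  set E : ℝ → ℝ := fun x =>
    (1/2) * (φ' x)^2 - (γ/2) * (φ x)^2 + ((ω - γ)/2) * Real.log (1 - (φ x)^2) with hE
  have hpos : ∀ x, 0 < 1 - (φ x)^2 := by
    intro x
    have h := abs_lt.mp (hb x)
    nlinarith [h.1, h.2]
  have hne : ∀ x, 1 - (φ x)^2 ≠ 0 := fun x => ne_of_gt (hpos x)
  have hEderiv : ∀ x, HasDerivAt E 0 x := by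
    intro x
    have h1 : HasDerivAt (fun y => (φ' y)^2) (2 * φ' x * φ'' x) x := by
      have := (hφ' x).fun_pow 2
      simpa [mul_comm, mul_assoc, mul_left_comm] using this
    have h2 : HasDerivAt (fun y => (φ y)^2) (2 * φ x * φ' x) x := by
      have := (hφ x).fun_pow 2
      simpa [mul_comm, mul_assoc, mul_left_comm] using this
    have h3 : HasDerivAt (fun y => (1:ℝ) - (φ y)^2) (-(2 * φ x * φ' x)) x := by
      simpa using (hasDerivAt_const x (1:ℝ)).fun_sub h2
    have h4 : HasDerivAt (fun y => Real.log (1 - (φ y)^2))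
        (-(2 * φ x * φ' x) / (1 - (φ x)^2)) x := h3.log (hne x)
    have h5 := ((h1.const_mul (1/2:ℝ)).sub (h2.const_mul (γ/2))).add
        (h4.const_mul ((ω - γ)/2))
    refine h5.congr_deriv ?_
    rw [hode x]
    field_simp [hne x]
    ring
  have hconst : ∀ x, E x = E x₀ := fun x =>
    is_const_of_deriv_eq_zero (fun y => (hEderiv y).differentiableAt)
      (fun y => (hEderiv y).deriv) x x₀
  have hlim : Tendsto E atTop (nhds 0) := by
    have hφ2 : Tendsto (fun x => (φ x)^2) atTop (nhds 0) := by
      simpa using hT.pow 2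
    have hφ'2 : Tendsto (fun x => (φ' x)^2) atTop (nhds 0) := by
      simpa using hT'.pow 2
    have hsub : Tendsto (fun x => 1 - (φ x)^2) atTop (nhds 1) := by
      simpa using tendsto_const_nhds.sub hφ2
    have hlog : Tendsto (fun x => Real.log (1 - (φ x)^2)) atTop (nhds 0) := by
      have := (Real.continuousAt_log one_ne_zero).tendsto.comp hsub
      simpa [Function.comp_def] using this
    have h6 := ((hφ'2.const_mul (1/2:ℝ)).sub (hφ2.const_mul (γ/2))).add
        (hlog.const_mul ((ω - γ)/2))
    have h0 : ((1:ℝ)/2)*0 - (γ/2)*0 + ((ω - γ)/2)*0 = 0 := by ring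
    rw [← h0]
    exact h6
  have hlimc : Tendsto E atTop (nhds (E x₀)) := by
    refine tendsto_const_nhds.congr fun x => (hconst x).symm
  have hE0 : E x₀ = 0 := tendsto_nhds_unique hlimc hlim
  have hEx0 : E x₀ = (1/2) * (φ' x₀)^2 - (γ/2) * (φ x₀)^2
      + ((ω - γ)/2) * Real.log (1 - (φ x₀)^2) := rfl
  rw [hEx0, hcrit, ← hM] at hE0
  linarith
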